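/- arXiv:2405.07618 — 2 statements merged into one kernel-verified Lean document; each statement's English description precedes it below -/
import Mathlib

section
/- For all z, w in the tube domain T_B, the Cauchy–Schwarz-type inequality |ρ(z,w)|² ≥ ρ(z) ρ(w) holds, where ρ(z) = ρ(z,z); equivalently, 1 - ρ(z)ρ(w)/|ρ(z,w)|² ∈ [0,1) so the Bergman distance formula β(z,w) = tanh⁻¹√(1 - ρ(z)ρ(w)/|ρ(z,w)|²) is well defined. -/
/- We model ℂ^(n+1) (the paper's ℂⁿ with n := n+1) as (Fin n → ℂ) × ℂ,
   writing z = (z', z_n).  All occurrences of the paper's dimension `n`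
   therefore become `n + 1` below. -/

noncomputable section

open MeasureTheory Complex Set

/-- The ambient space ℂ^(n+1), split as (z', z_n). -/
abbrev TubeC (n : ℕ) := (Fin n → ℂ) × ℂ

/-- ρ(z,w) = (1/4)((z'-conj w')·(z'-conj w') - 2i(z_n - conj w_n)). -/
def rhoK {n : ℕ} (z w : TubeC n) : ℂ :=
  (1/4 : ℂ) * ((∑ j, (z.1 j - (starRingEnd ℂ) (w.1 j)) ^ 2)
    - 2 * Complex.I * (z.2 - (starRingEnd ℂ) w.2))

/-- ρ(z) = Im z_n - |Im z'|². -/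
def rhoR {n : ℕ} (z : TubeC n) : ℝ := z.2.im - ∑ j, (z.1 j).im ^ 2

/-- The tube domain T_B. -/
def TB (n : ℕ) : Set (TubeC n) := {z | ∑ j, (z.1 j).im ^ 2 < z.2.im}

/-- Inverse hyperbolic tangent. -/
def artanh (x : ℝ) : ℝ := (1/2) * Real.log ((1 + x) / (1 - x))

/-- The Bergman distance on T_B. -/
def betaB {n : ℕ} (z w : TubeC n) : ℝ :=
  artanh (Real.sqrt (1 - rhoR z * rhoR w / ‖rhoK z w‖ ^ 2))

/-- The Bergman metric ball D(z,r). -/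
def DB {n : ℕ} (z : TubeC n) (r : ℝ) : Set (TubeC n) := {w ∈ TB n | betaB z w < r}

/-- Euclidean norm of a point of ℂ^(n+1). -/
def euclidNorm {n : ℕ} (z : TubeC n) : ℝ :=
  Real.sqrt ((∑ j, ‖z.1 j‖ ^ 2) + ‖z.2‖ ^ 2)

/-- The point 𝐢 = (0', i). -/
def iPt (n : ℕ) : TubeC n := (0, Complex.I)

lemma re_rhoK {n : ℕ} (z w : TubeC n) :
    (rhoK z w).re = (rhoR z + rhoR w)/2 +
      (1/4) * ((∑ j, ((z.1 j).re - (w.1 j).re)^2) + (∑ j, ((z.1 j).im - (w.1 j).im)^2)) := by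
  have e1 : (∑ j, (z.1 j - (starRingEnd ℂ) (w.1 j)) ^ 2).re
      = ∑ j, (((z.1 j).re - (w.1 j).re)^2 - ((z.1 j).im + (w.1 j).im)^2) := by
    rw [Complex.re_sum]
    refine Finset.sum_congr rfl fun j _ => ?_
    simp [pow_two, Complex.mul_re, Complex.sub_re, Complex.sub_im]
  simp only [rhoK, rhoR, Complex.mul_re, Complex.mul_im, Complex.sub_re, Complex.sub_im,
    Complex.I_re, Complex.I_im, Complex.conj_re, Complex.conj_im, e1]
  have e2 : ∑ j, (((z.1 j).re - (w.1 j).re)^2 - ((z.1 j).im + (w.1 j).im)^2)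
      = (∑ j, ((z.1 j).re - (w.1 j).re)^2) + (∑ j, ((z.1 j).im - (w.1 j).im)^2)
        - 2*(∑ j, (z.1 j).im^2) - 2*(∑ j, (w.1 j).im^2) := by
    rw [Finset.mul_sum, Finset.mul_sum, ← Finset.sum_add_distrib, ← Finset.sum_sub_distrib,
      ← Finset.sum_sub_distrib]
    exact Finset.sum_congr rfl fun j _ => by ring
  rw [e2]; norm_num; ring

/-- |ρ(z,w)|² ≥ ρ(z)ρ(w), and 1 - ρ(z)ρ(w)/|ρ(z,w)|² ∈ [0,1). -/
theorem stmt_2 (n : ℕ) (z w : TubeC n) (hz : z ∈ TB n) (hw : w ∈ TB n) :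
    rhoR z * rhoR w ≤ ‖rhoK z w‖ ^ 2 ∧
    (1 - rhoR z * rhoR w / ‖rhoK z w‖ ^ 2) ∈ Set.Ico (0 : ℝ) 1 := by
  have hz' : 0 < rhoR z := sub_pos.mpr hz
  have hw' : 0 < rhoR w := sub_pos.mpr hw
  have hs1 : (0:ℝ) ≤ ∑ j, ((z.1 j).re - (w.1 j).re)^2 :=
    Finset.sum_nonneg fun j _ => sq_nonneg _
  have hs2 : (0:ℝ) ≤ ∑ j, ((z.1 j).im - (w.1 j).im)^2 :=
    Finset.sum_nonneg fun j _ => sq_nonneg _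
  have hre : (rhoR z + rhoR w)/2 ≤ (rhoK z w).re := by
    rw [re_rhoK]; nlinarith
  have hre0 : 0 < (rhoK z w).re := lt_of_lt_of_le (by linarith) hre
  have habs : (rhoK z w).re ≤ ‖rhoK z w‖ :=
    Complex.re_le_norm _
  have hmain : rhoR z * rhoR w ≤ ‖rhoK z w‖ ^ 2 := by
    have h1 : rhoR z * rhoR w ≤ ((rhoR z + rhoR w)/2)^2 := by
      nlinarith [sq_nonneg (rhoR z - rhoR w)]
    have h2 : ((rhoR z + rhoR w)/2)^2 ≤ (rhoK z w).re ^ 2 := by nlinarith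
    nlinarith [norm_nonneg (rhoK z w)]
  have hne : rhoK z w ≠ 0 := fun h => by simp [h] at hre0
  have habs0 : 0 < ‖rhoK z w‖ ^ 2 := pow_pos (norm_pos_iff.mpr hne) 2
  refine ⟨hmain, ?_, ?_⟩
  · have := div_le_one habs0 |>.mpr hmain
    linarith
  · have : 0 < rhoR z * rhoR w / ‖rhoK z w‖ ^ 2 :=
      div_pos (mul_pos hz' hw') habs0
    linarith
end
end

section
/- For every point a in the tube domain T_B, one has |ρ(𝐢, a)| ≥ 1/2, where 𝐢 = (0', i) ∈ T_B. -/
/- We model ℂ^(n+1) (the paper's ℂⁿ with n := n+1) as (Fin n → ℂ) × ℂ,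
   writing z = (z', z_n).  All occurrences of the paper's dimension `n`
   therefore become `n + 1` below. -/

noncomputable section

open MeasureTheory Complex Set

/-- |ρ(𝐢, a)| ≥ 1/2 for every a ∈ T_B. -/
theorem stmt_3 (n : ℕ) (a : TubeC n) (ha : a ∈ TB n) :
    (1 : ℝ) / 2 ≤ ‖rhoK (iPt n) a‖ := by
  have hy : (0:ℝ) ≤ ∑ j, (a.1 j).im ^ 2 :=
    Finset.sum_nonneg fun j _ => sq_nonneg _
  have ha' : ∑ j, (a.1 j).im ^ 2 < a.2.im := ha
  refine le_trans ?_ (Complex.re_le_norm _)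
  have hre : (rhoK (iPt n) a).re
      = (1/4) * ((∑ j, ((a.1 j).re ^ 2 - (a.1 j).im ^ 2)) + 2 + 2 * a.2.im) := by
    simp only [rhoK, iPt, Complex.mul_re, Complex.sub_re, Complex.sub_im,
      Complex.mul_im, Complex.I_re, Complex.I_im, Complex.ofReal_re,
      Complex.conj_re, Complex.conj_im, Complex.re_sum, Complex.im_sum]
    simp [Complex.ext_iff, Complex.mul_re, Complex.mul_im, Complex.conj_re,
      Complex.conj_im, Finset.sum_sub_distrib, sq]
    ring
  have hx : (0:ℝ) ≤ ∑ j, (a.1 j).re ^ 2 :=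
    Finset.sum_nonneg fun j _ => sq_nonneg _
  rw [hre, Finset.sum_sub_distrib]
  nlinarith
end
end
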